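/- There exists a constant M > 0, depending only on n, a, and Γ, with the following property: for every u ∈ ℝ^n with u > 0 entrywise and ‖u‖ = 1, every λ ∈ ℝ, every (Δ, δ) solving the Newton system at (u,λ), and every θ ∈ (0,1], writing w = u + θΔ and u' = w/‖w‖ (assuming w ≠ 0), one has ‖ r(u',λ) − ((1−θ)/‖w‖)·r(u,λ) − (θδ/‖w‖)·u ‖ ≤ M·θ²·‖Δ‖². Moreover, if additionally u' > 0 entrywise, then λ(u') − λ(u) = min_i (r(u', λ(u)))_i / u'_i. -/

import Mathlib

open Matrix Finset

noncomputable def euclNorm {n : ℕ} (u : Fin n → ℝ) : ℝ := Real.sqrt (∑ i, u i ^ 2)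

def IsZMatrix {n : ℕ} (B : Matrix (Fin n) (Fin n) ℝ) : Prop :=
  ∀ i j, i ≠ j → B i j ≤ 0

def IsIrreducibleMat {n : ℕ} (B : Matrix (Fin n) (Fin n) ℝ) : Prop :=
  ¬ ∃ S : Finset (Fin n), S.Nonempty ∧ S ≠ Finset.univ ∧
    ∀ i ∈ S, ∀ j ∉ S, B i j = 0

def IsNonsingularM {n : ℕ} (B : Matrix (Fin n) (Fin n) ℝ) : Prop :=
  IsZMatrix B ∧ IsUnit B ∧ ∀ i j, 0 ≤ B⁻¹ i j

noncomputable def calA {n : ℕ} (A : Matrix (Fin n) (Fin n) ℝ) (Γ : ℝ) (a : Fin n → ℝ)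
    (u : Fin n → ℝ) : Matrix (Fin n) (Fin n) ℝ :=
  A + Γ • Matrix.diagonal (fun i => 1 - 1 / (a i + u i ^ 2))

noncomputable def rvec {n : ℕ} (A : Matrix (Fin n) (Fin n) ℝ) (Γ : ℝ) (a : Fin n → ℝ)
    (u : Fin n → ℝ) (lam : ℝ) : Fin n → ℝ :=
  calA A Γ a u *ᵥ u - lam • u

noncomputable def Jmat {n : ℕ} (A : Matrix (Fin n) (Fin n) ℝ) (Γ : ℝ) (a : Fin n → ℝ)
    (u : Fin n → ℝ) (lam : ℝ) : Matrix (Fin n) (Fin n) ℝ :=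
  A + (Γ - lam) • (1 : Matrix (Fin n) (Fin n) ℝ)
    - Γ • Matrix.diagonal (fun i => (a i - u i ^ 2) / (a i + u i ^ 2) ^ 2)

noncomputable def lamOf {n : ℕ} [NeZero n] (A : Matrix (Fin n) (Fin n) ℝ) (Γ : ℝ)
    (a : Fin n → ℝ) (u : Fin n → ℝ) : ℝ :=
  ⨅ i, (calA A Γ a u *ᵥ u) i / u i

def NewtonSystem {n : ℕ} (A : Matrix (Fin n) (Fin n) ℝ) (Γ : ℝ) (a : Fin n → ℝ)
    (u : Fin n → ℝ) (lam : ℝ) (Δ : Fin n → ℝ) (δ : ℝ) : Prop :=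
  Jmat A Γ a u lam *ᵥ Δ - δ • u = -rvec A Γ a u lam ∧
  -(u ⬝ᵥ Δ) = -(1/2 * (u ⬝ᵥ u - 1))

noncomputable def wvec {n : ℕ} (u Δ : Fin n → ℝ) (θ : ℝ) : Fin n → ℝ := u + θ • Δ

noncomputable def unext {n : ℕ} (u Δ : Fin n → ℝ) (θ : ℝ) : Fin n → ℝ :=
  (euclNorm (wvec u Δ θ))⁻¹ • wvec u Δ θ

set_option maxHeartbeats 1000000 in
lemma taylorB (a u h : ℝ) (ha : 0 < a) :
    |(u+h)/(a+(u+h)^2) - u/(a+u^2) - (h*((a-u^2)/(a+u^2)^2))| ≤ 3/(a*Real.sqrt a) * h^2 := by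
  set b := Real.sqrt a with hbdef
  have hb : 0 < b := Real.sqrt_pos.mpr ha
  have hb2 : b^2 = a := Real.sq_sqrt ha.le
  set X := a + (u+h)^2 with hXdef
  set Y := a + u^2 with hYdef
  have hX : 0 < X := by positivity
  have hY : 0 < Y := by positivity
  have hid : (u+h)/X - u/Y - (h*((a-u^2)/Y^2))
      = (h^2*((u^2-a)*h + u^3 - 3*a*u))/(X*Y^2) := by
    field_simp
    ring
  rw [hid]
  have h1 : |u| * (2*b) ≤ Y := by nlinarith [sq_nonneg (|u| - b), sq_abs u]
  have h2 : |u+h| * (2*b) ≤ X := by nlinarith [sq_nonneg (|u+h| - b), sq_abs (u+h)]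
  have h3 : |h| * (2*b) ≤ X + Y := by
    have hh : |h| ≤ |u+h| + |u| := by
      calc |h| = |(u+h) - u| := by ring_nf
        _ ≤ |u+h| + |u| := abs_sub _ _
    nlinarith [hh]
  have e1 : |u^2 - a| ≤ Y := by
    rw [abs_le]; constructor <;> nlinarith [sq_nonneg u]
  have e2 : |u^2 - 3*a| ≤ 3*Y := by
    rw [abs_le]; constructor <;> nlinarith [sq_nonneg u]
  have hnum : |(u^2-a)*h + u^3 - 3*a*u| ≤ Y*|h| + 3*Y*|u| := by
    calc |(u^2-a)*h + u^3 - 3*a*u| = |(u^2-a)*h + u*(u^2-3*a)| := by ring_nf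
      _ ≤ |(u^2-a)*h| + |u*(u^2-3*a)| := abs_add_le _ _
      _ = |u^2-a| * |h| + |u| * |u^2-3*a| := by rw [abs_mul, abs_mul]
      _ ≤ Y*|h| + 3*Y*|u| := by
          nlinarith [abs_nonneg h, abs_nonneg u, e1, e2]
  have hkey : |(u^2-a)*h + u^3 - 3*a*u| ≤ (3/(a*b)) * (X*Y^2) := by
    rw [div_mul_eq_mul_div, le_div_iff₀ (by positivity)]
    have q1 : (2*b)*|(u^2-a)*h + u^3 - 3*a*u| ≤ (2*b)*(Y*|h| + 3*Y*|u|) :=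
      mul_le_mul_of_nonneg_left hnum (by positivity)
    have q2 : Y*(|h| * (2*b)) ≤ Y*(X+Y) := mul_le_mul_of_nonneg_left h3 hY.le
    have q3 : (3*Y)*(|u| *(2*b)) ≤ (3*Y)*Y := mul_le_mul_of_nonneg_left h1 (by positivity)
    have q4 : (2*b)*|(u^2-a)*h + u^3 - 3*a*u| ≤ X*Y + 4*Y^2 := by linarith [q1, q2, q3]
    have q5 : a*(X*Y + 4*Y^2) ≤ 5*(X*Y^2) := by
      have m1 := mul_le_mul_of_nonneg_left (show a ≤ Y by nlinarith [sq_nonneg u]) (mul_nonneg hX.le hY.le)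
      have m2 := mul_le_mul_of_nonneg_left (show a ≤ X by nlinarith [sq_nonneg (u+h)]) (show (0:ℝ) ≤ 4*Y^2 by positivity)
      nlinarith [m1, m2]
    linarith [mul_le_mul_of_nonneg_left q4 ha.le, q5, mul_nonneg (mul_nonneg hX.le hY.le) hY.le]
  calc |h^2*((u^2-a)*h + u^3 - 3*a*u)/(X*Y^2)|
      = h^2 * |(u^2-a)*h + u^3 - 3*a*u| / (X*Y^2) := by
        rw [abs_div, abs_mul, abs_of_nonneg (sq_nonneg h), abs_of_pos (by positivity : (0:ℝ) < X*Y^2)]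
    _ ≤ h^2 * ((3/(a*b)) * (X*Y^2)) / (X*Y^2) := by gcongr
    _ = 3/(a*b) * h^2 := by field_simp

set_option maxHeartbeats 1000000 in
lemma normB (a w s : ℝ) (ha : 0 < a) (hs : 1 ≤ s) :
    |(w/s)/(a+(w/s)^2) - (w/(a+w^2))/s| ≤ (s^2-1)/(2*Real.sqrt a) := by
  set b := Real.sqrt a with hbdef
  have hb : 0 < b := Real.sqrt_pos.mpr ha
  have hb2 : b^2 = a := Real.sq_sqrt ha.le
  have hs0 : 0 < s := lt_of_lt_of_le one_pos hs
  have hd1 : 0 < a*s^2 + w^2 := by positivity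
  have hd2 : 0 < a + w^2 := by positivity
  have hid : (w/s)/(a+(w/s)^2) - (w/(a+w^2))/s
      = w^3*(s^2-1)/(s*(a*s^2+w^2)*(a+w^2)) := by
    field_simp
    ring
  rw [hid, abs_div, abs_of_pos (by positivity : (0:ℝ) < s*(a*s^2+w^2)*(a+w^2))]
  rw [div_le_div_iff₀ (by positivity) (by positivity)]
  have hss : (0:ℝ) ≤ s^2 - 1 := by nlinarith
  have habs : |w^3*(s^2-1)| = |w| ^3*(s^2-1) := by
    rw [abs_mul, abs_of_nonneg hss, abs_pow]
  rw [habs]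
  have k1 : |w| * (2*b) ≤ a + w^2 := by nlinarith [sq_nonneg (|w| - b), sq_abs w]
  have k2 : |w| ^3*(2*b) ≤ (a+w^2)^2 := by
    have t1 : |w| * (2*b)*w^2 ≤ (a+w^2)*w^2 := mul_le_mul_of_nonneg_right k1 (sq_nonneg w)
    have t2 : |w| ^3 = |w| * w^2 := by rw [pow_succ, sq_abs]; ring
    nlinarith [t1, sq_nonneg w, ha]
  have h2s : (1:ℝ) ≤ s^2 := by nlinarith
  have h3s : (1:ℝ) ≤ s^3 := by nlinarith [h2s, hs]
  have k3 : a + w^2 ≤ s*(a*s^2+w^2) := by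
    nlinarith [mul_nonneg ha.le (show (0:ℝ) ≤ s^3 - 1 by linarith),
      mul_nonneg (sq_nonneg w) (show (0:ℝ) ≤ s - 1 by linarith)]
  have k4 : (a+w^2)^2 ≤ s*(a*s^2+w^2)*(a+w^2) := by
    nlinarith [mul_le_mul_of_nonneg_right k3 hd2.le]
  calc |w| ^3*(s^2-1)*(2*b) = (s^2-1) * (|w| ^3*(2*b)) := by ring
    _ ≤ (s^2-1) * ((a+w^2)^2) := mul_le_mul_of_nonneg_left k2 hss
    _ ≤ (s^2-1) * (s*(a*s^2+w^2)*(a+w^2)) := mul_le_mul_of_nonneg_left k4 hss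

lemma euclNorm_sq' {n : ℕ} (u : Fin n → ℝ) : euclNorm u ^ 2 = ∑ i, u i ^ 2 :=
  Real.sq_sqrt (by positivity)

lemma euclNorm_nonneg' {n : ℕ} (u : Fin n → ℝ) : 0 ≤ euclNorm u := Real.sqrt_nonneg _

lemma iInf_sub_const {n : ℕ} [NeZero n] (f : Fin n → ℝ) (c : ℝ) :
    (⨅ i, (f i - c)) = (⨅ i, f i) - c := by
  haveI : Nonempty (Fin n) := Fin.pos_iff_nonempty.mp (Nat.pos_of_ne_zero (NeZero.ne n))
  obtain ⟨i0, hi0⟩ := Finite.exists_min f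
  have h1 : (⨅ i, f i) = f i0 :=
    le_antisymm (ciInf_le (Set.Finite.bddBelow (Set.finite_range f)) i0) (le_ciInf hi0)
  have h2 : (⨅ i, (f i - c)) = f i0 - c :=
    le_antisymm (ciInf_le (Set.Finite.bddBelow (Set.finite_range _)) i0)
      (le_ciInf fun i => by linarith [hi0 i])
  rw [h1, h2]

set_option maxHeartbeats 2000000 in
theorem stmt_9 {n : ℕ} [NeZero n] (A : Matrix (Fin n) (Fin n) ℝ) (a : Fin n → ℝ) (Γ : ℝ)
    (ha : ∀ i, 0 < a i) (hΓ : 0 < Γ)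
    (hA : IsNonsingularM A) (hAirr : IsIrreducibleMat A) :
    ∃ M : ℝ, 0 < M ∧
      ∀ (u : Fin n → ℝ) (lam : ℝ) (Δ : Fin n → ℝ) (δ : ℝ) (θ : ℝ),
        (∀ i, 0 < u i) → euclNorm u = 1 →
        NewtonSystem A Γ a u lam Δ δ →
        0 < θ → θ ≤ 1 → wvec u Δ θ ≠ 0 →
        euclNorm (rvec A Γ a (unext u Δ θ) lam
            - ((1 - θ) / euclNorm (wvec u Δ θ)) • rvec A Γ a u lam
            - (θ * δ / euclNorm (wvec u Δ θ)) • u) ≤ M * θ ^ 2 * euclNorm Δ ^ 2 ∧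
        ((∀ i, 0 < unext u Δ θ i) →
          lamOf A Γ a (unext u Δ θ) - lamOf A Γ a u =
            ⨅ i, rvec A Γ a (unext u Δ θ) (lamOf A Γ a u) i / unext u Δ θ i) := by
  set c : Fin n → ℝ := fun i => Γ * (3 / (a i * Real.sqrt (a i)) + 1 / (2 * Real.sqrt (a i))) with hcdef
  have hc : ∀ i, 0 ≤ c i := fun i => by
    have := ha i
    have : 0 < Real.sqrt (a i) := Real.sqrt_pos.mpr this
    positivity
  have hcs : (0:ℝ) ≤ ∑ i, c i := Finset.sum_nonneg fun i _ => hc i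
  refine ⟨∑ i, c i + 1, by linarith, ?_⟩
  intro u lam Δ δ θ hu hnu hNS hθ hθ1 hwne
  obtain ⟨hN1, hN2⟩ := hNS
  set w : Fin n → ℝ := wvec u Δ θ with hwdef
  set s : ℝ := euclNorm w with hsdef
  -- basic norm facts
  have husq : ∑ i, u i ^ 2 = 1 := by
    have := euclNorm_sq' u; rw [hnu] at this; linarith
  have huu : u ⬝ᵥ u = 1 := by
    have : u ⬝ᵥ u = ∑ i, u i ^ 2 := by simp [dotProduct, pow_two]
    rw [this, husq]
  have huΔ : u ⬝ᵥ Δ = 0 := by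
    rw [huu] at hN2; linarith
  have hwi : ∀ i, w i = u i + θ * Δ i := fun i => by
    simp [hwdef, wvec]
  have hs2 : s ^ 2 = 1 + θ ^ 2 * euclNorm Δ ^ 2 := by
    have h1 : s ^ 2 = ∑ i, w i ^ 2 := euclNorm_sq' w
    have h2 : ∑ i, w i ^ 2 = ∑ i, (u i ^ 2 + 2 * θ * (u i * Δ i) + θ ^ 2 * Δ i ^ 2) :=
      Finset.sum_congr rfl fun i _ => by rw [hwi i]; ring
    have h3 : ∑ i, (u i ^ 2 + 2 * θ * (u i * Δ i) + θ ^ 2 * Δ i ^ 2)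
        = (∑ i, u i ^ 2) + 2 * θ * (∑ i, u i * Δ i) + θ ^ 2 * (∑ i, Δ i ^ 2) := by
      rw [Finset.sum_add_distrib, Finset.sum_add_distrib, ← Finset.mul_sum, ← Finset.mul_sum]
    have h4 : (∑ i, u i * Δ i) = 0 := huΔ
    rw [h1, h2, h3, h4, husq, euclNorm_sq' Δ]; ring
  have hs1 : 1 ≤ s := by
    nlinarith [euclNorm_nonneg' w, hs2, sq_nonneg θ, sq_nonneg (euclNorm Δ), sq_nonneg (θ * euclNorm Δ),
      mul_nonneg (sq_nonneg θ) (sq_nonneg (euclNorm Δ))]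
  have hs0 : (0:ℝ) < s := lt_of_lt_of_le one_pos hs1
  constructor
  · -- main estimate
    have hNi : ∀ i, (A *ᵥ Δ) i + (Γ - lam) * Δ i
          - Γ * ((a i - u i ^ 2) / (a i + u i ^ 2) ^ 2 * Δ i) - δ * u i
        = -((A *ᵥ u) i + Γ * ((1 - 1 / (a i + u i ^ 2)) * u i) - lam * u i) := by
      intro i
      have h := congrFun hN1 i
      simpa [Jmat, rvec, calA, sub_mulVec, add_mulVec, smul_mulVec, one_mulVec,
        mulVec_diagonal, Pi.sub_apply, Pi.add_apply, Pi.smul_apply, smul_eq_mul,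
        Pi.neg_apply] using h
    have hunext_eq : unext u Δ θ = s⁻¹ • w := by rw [hsdef, hwdef]; rfl
    set T : Fin n → ℝ := rvec A Γ a (unext u Δ θ) lam
        - ((1 - θ) / s) • rvec A Γ a u lam - (θ * δ / s) • u with hTdef
    have hT : ∀ i, T i
        = -Γ * ((u i + θ * Δ i) / s / (a i + ((u i + θ * Δ i) / s) ^ 2)
              - (u i + θ * Δ i) / (a i + (u i + θ * Δ i) ^ 2) / s)
          - Γ / s * ((u i + θ * Δ i) / (a i + (u i + θ * Δ i) ^ 2) - u i / (a i + u i ^ 2)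
              - (θ * Δ i * ((a i - u i ^ 2) / (a i + u i ^ 2) ^ 2))) := by
      intro i
      have hQ : (A *ᵥ Δ) i = δ * u i - (A *ᵥ u) i - Γ * ((1 - 1 / (a i + u i ^ 2)) * u i)
          + lam * u i - (Γ - lam) * Δ i
          + Γ * ((a i - u i ^ 2) / (a i + u i ^ 2) ^ 2 * Δ i) := by linarith [hNi i]
      have hAw : (A *ᵥ w) i = (A *ᵥ u) i + θ * (A *ᵥ Δ) i := by
        rw [hwdef]
        unfold wvec
        rw [mulVec_add, mulVec_smul, Pi.add_apply, Pi.smul_apply, smul_eq_mul]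
      have hAu' : (A *ᵥ unext u Δ θ) i = s⁻¹ * ((A *ᵥ u) i + θ * (A *ᵥ Δ) i) := by
        rw [hunext_eq, mulVec_smul, Pi.smul_apply, smul_eq_mul, hAw]
      have hune : ∀ j, unext u Δ θ j = s⁻¹ * w j := fun j => by
        rw [hunext_eq]; rfl
      have hY : a i + u i ^ 2 ≠ 0 := ne_of_gt (add_pos_of_pos_of_nonneg (ha i) (sq_nonneg _))
      have hsne : s ≠ 0 := ne_of_gt hs0
      have hsmall : (A *ᵥ u) i + θ * (A *ᵥ Δ) i + (Γ - lam) * (u i + θ * Δ i)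
            - (1 - θ) * ((A *ᵥ u) i + Γ * ((1 - 1 / (a i + u i ^ 2)) * u i) - lam * u i)
            - θ * δ * u i
          = Γ * (u i / (a i + u i ^ 2)
              + θ * Δ i * ((a i - u i ^ 2) / (a i + u i ^ 2) ^ 2)) := by
        rw [hQ]
        field_simp
        ring
      rw [hTdef]
      simp only [rvec, calA, add_mulVec, smul_mulVec, mulVec_diagonal,
        Pi.sub_apply, Pi.add_apply, Pi.smul_apply, smul_eq_mul]
      rw [hAu', hune i, hwi i]
      simp only [← div_eq_inv_mul]
      linear_combination (1 / s) * hsmall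
    have hDi : ∀ i, Δ i ^ 2 ≤ euclNorm Δ ^ 2 := fun i => by
      rw [euclNorm_sq' Δ]
      exact Finset.single_le_sum (fun j _ => sq_nonneg (Δ j)) (Finset.mem_univ i)
    have hTb : ∀ i, |T i| ≤ c i * (θ ^ 2 * euclNorm Δ ^ 2) := by
      intro i
      rw [hT i]
      have hq : 0 < Real.sqrt (a i) := Real.sqrt_pos.mpr (ha i)
      have b1 := normB (a i) (u i + θ * Δ i) s (ha i) hs1
      have b2 := taylorB (a i) (u i) (θ * Δ i) (ha i)
      have tri : |(-Γ * ((u i + θ * Δ i) / s / (a i + ((u i + θ * Δ i) / s) ^ 2)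
              - (u i + θ * Δ i) / (a i + (u i + θ * Δ i) ^ 2) / s))
          - Γ / s * ((u i + θ * Δ i) / (a i + (u i + θ * Δ i) ^ 2) - u i / (a i + u i ^ 2)
              - (θ * Δ i * ((a i - u i ^ 2) / (a i + u i ^ 2) ^ 2)))|
          ≤ Γ * |((u i + θ * Δ i) / s / (a i + ((u i + θ * Δ i) / s) ^ 2)
              - (u i + θ * Δ i) / (a i + (u i + θ * Δ i) ^ 2) / s)|
            + Γ / s * |((u i + θ * Δ i) / (a i + (u i + θ * Δ i) ^ 2) - u i / (a i + u i ^ 2)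
              - (θ * Δ i * ((a i - u i ^ 2) / (a i + u i ^ 2) ^ 2)))| := by
        refine le_trans (abs_sub _ _) ?_
        rw [abs_mul, abs_mul, abs_neg, abs_of_pos hΓ, abs_of_pos (div_pos hΓ hs0)]
      refine le_trans tri ?_
      have e1 : Γ * |((u i + θ * Δ i) / s / (a i + ((u i + θ * Δ i) / s) ^ 2)
              - (u i + θ * Δ i) / (a i + (u i + θ * Δ i) ^ 2) / s)|
          ≤ Γ * (1 / (2 * Real.sqrt (a i))) * (θ ^ 2 * euclNorm Δ ^ 2) := by
        have := mul_le_mul_of_nonneg_left b1 hΓ.le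
        calc Γ * _ ≤ Γ * ((s ^ 2 - 1) / (2 * Real.sqrt (a i))) := this
          _ = Γ * (1 / (2 * Real.sqrt (a i))) * (θ ^ 2 * euclNorm Δ ^ 2) := by
              rw [hs2]; ring
      have e2 : Γ / s * |((u i + θ * Δ i) / (a i + (u i + θ * Δ i) ^ 2) - u i / (a i + u i ^ 2)
              - (θ * Δ i * ((a i - u i ^ 2) / (a i + u i ^ 2) ^ 2)))|
          ≤ Γ * (3 / (a i * Real.sqrt (a i))) * (θ ^ 2 * euclNorm Δ ^ 2) := by
        have h5 : Γ / s ≤ Γ := div_le_self hΓ.le hs1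
        have h6 : 3 / (a i * Real.sqrt (a i)) * (θ * Δ i) ^ 2
            ≤ 3 / (a i * Real.sqrt (a i)) * (θ ^ 2 * euclNorm Δ ^ 2) := by
          have h7 : (θ * Δ i) ^ 2 ≤ θ ^ 2 * euclNorm Δ ^ 2 := by
            have := mul_le_mul_of_nonneg_left (hDi i) (sq_nonneg θ)
            nlinarith [this]
          refine mul_le_mul_of_nonneg_left h7 (le_of_lt ?_)
          exact div_pos (by norm_num) (mul_pos (ha i) (Real.sqrt_pos.mpr (ha i)))
        calc Γ / s * |_| ≤ Γ * |((u i + θ * Δ i) / (a i + (u i + θ * Δ i) ^ 2) - u i / (a i + u i ^ 2)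
              - (θ * Δ i * ((a i - u i ^ 2) / (a i + u i ^ 2) ^ 2)))| :=
            mul_le_mul_of_nonneg_right h5 (abs_nonneg _)
          _ ≤ Γ * (3 / (a i * Real.sqrt (a i)) * (θ * Δ i) ^ 2) :=
            mul_le_mul_of_nonneg_left b2 hΓ.le
          _ ≤ Γ * (3 / (a i * Real.sqrt (a i)) * (θ ^ 2 * euclNorm Δ ^ 2)) :=
            mul_le_mul_of_nonneg_left h6 hΓ.le
          _ = Γ * (3 / (a i * Real.sqrt (a i))) * (θ ^ 2 * euclNorm Δ ^ 2) := by ring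
      calc _ ≤ Γ * (1 / (2 * Real.sqrt (a i))) * (θ ^ 2 * euclNorm Δ ^ 2)
            + Γ * (3 / (a i * Real.sqrt (a i))) * (θ ^ 2 * euclNorm Δ ^ 2) := add_le_add e1 e2
        _ = c i * (θ ^ 2 * euclNorm Δ ^ 2) := by simp only [hcdef]; ring
    have h8 : euclNorm T ≤ ∑ i, |T i| := by
      rw [show euclNorm T = Real.sqrt (∑ i, T i ^ 2) from rfl]
      have h9 : ∑ i, T i ^ 2 ≤ (∑ i, |T i|) ^ 2 := by
        have := Finset.sum_sq_le_sq_sum_of_nonneg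
          (s := Finset.univ) (f := fun i => |T i|) (fun i _ => abs_nonneg (T i))
        simpa [sq_abs] using this
      calc Real.sqrt (∑ i, T i ^ 2) ≤ Real.sqrt ((∑ i, |T i|) ^ 2) := Real.sqrt_le_sqrt h9
        _ = ∑ i, |T i| := Real.sqrt_sq (Finset.sum_nonneg fun i _ => abs_nonneg _)
    have hnn : (0:ℝ) ≤ θ ^ 2 * euclNorm Δ ^ 2 := by positivity
    calc euclNorm T ≤ ∑ i, |T i| := h8
      _ ≤ ∑ i, c i * (θ ^ 2 * euclNorm Δ ^ 2) := Finset.sum_le_sum fun i _ => hTb i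
      _ = (∑ i, c i) * (θ ^ 2 * euclNorm Δ ^ 2) := by rw [← Finset.sum_mul]
      _ ≤ (∑ i, c i + 1) * (θ ^ 2 * euclNorm Δ ^ 2) := by nlinarith [hnn, hcs]
      _ = (∑ i, c i + 1) * θ ^ 2 * euclNorm Δ ^ 2 := by ring
  · -- lamOf identity
    intro hup
    set v : Fin n → ℝ := unext u Δ θ with hvdef
    have hcomp : ∀ i, rvec A Γ a v (lamOf A Γ a u) i / v i
        = (calA A Γ a v *ᵥ v) i / v i - lamOf A Γ a u := by
      intro i
      have hvne : v i ≠ 0 := ne_of_gt (hup i)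
      simp only [rvec, Pi.sub_apply, Pi.smul_apply, smul_eq_mul]
      rw [sub_div, mul_div_assoc, div_self hvne, mul_one]
    rw [iInf_congr hcomp, iInf_sub_const]
    rfl
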